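/- For any nonempty well-quasi-order Q, the quasi-order T_f(Q) of finite leaf-labelled trees over Q ordered by tree homomorphisms satisfies o(T_f(Q)) = o(P_f(T_f(Q))) and w(T_f(Q)) = w(P_f(T_f(Q))), where P_f denotes the finite powerset with domination ordering. -/

import Mathlib

universe u v

open Ordinal

/-- A quasi-order: a reflexive transitive binary relation. -/
def IsQO {Q : Type u} (le : Q → Q → Prop) : Prop :=
  Reflexive le ∧ Transitive le

/-- A well-quasi-order: a quasi-order in which every infinite sequence of elements
contains a weakly increasing pair. -/
def IsWQO {Q : Type u} (le : Q → Q → Prop) : Prop :=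
  IsQO le ∧ ∀ f : ℕ → Q, ∃ i j : ℕ, i < j ∧ le (f i) (f j)

/-- The maximal order type of a (well-)quasi-order: the supremum of the order types of
all its linearizations.  A linearization of `le` having order type `o` is (up to
quotienting by equivalence) the same thing as a surjection `g : Q → o.toType` such that
`le a b → g a ≤ g b`; the linearization is then `fun a b => g a ≤ g b`. -/
noncomputable def maxOrderType {Q : Type u} (le : Q → Q → Prop) : Ordinal.{u} :=
  sSup { o : Ordinal.{u} |
    ∃ g : Q → o.ToType, Function.Surjective g ∧ ∀ a b : Q, le a b → g a ≤ g b }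

/-- Incomparability in a quasi-order. -/
def IncompRelQO {Q : Type u} (le : Q → Q → Prop) (x y : Q) : Prop :=
  ¬ le x y ∧ ¬ le y x

/-- One step in building finite antichain sequences: `a` extends `b` by one element
incomparable with every element of `b`. -/
def WidthStep {Q : Type u} (le : Q → Q → Prop) (a b : List Q) : Prop :=
  ∃ x : Q, (∀ y ∈ b, IncompRelQO le x y) ∧ a = b ++ [x]

open Classical in
/-- The width of a wqo, given by the recursion `w(Q) = sup_{x ∈ Q} (w(L_⊥(x)) + 1)`:
it is the rank of `[]` in the well-founded tree of finite antichain sequences, where the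
rank of an antichain sequence `l` is `sup (rank (l ++ [x]) + 1)` over all `x`
incomparable with every element of `l` (the elements incomparable with all of `l` being
exactly the current suborder `L_⊥`). -/
noncomputable def widthQO {Q : Type u} (le : Q → Q → Prop) : Ordinal.{u} :=
  if h : WellFounded (WidthStep le) then (h.apply ([] : List Q)).rank else 0

/-- Finite leaf-labelled trees over `Q`: leaves carry labels from `Q`, and an internal
node carries a finite nonempty list of children (encoded as a head child plus the list
of remaining children). -/
inductive LTree (Q : Type u) : Type u
  | leaf : Q → LTree Q
  | node : LTree Q → List (LTree Q) → LTree Q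

mutual
/-- The tree-homomorphism quasi-order `≤_T` on finite leaf-labelled trees:
`·x ≤_T ·y` iff `le x y`; `·x ≤_T ·(τ₀,…,τ_{l-1})` iff `·x ≤_T τ_j` for some `j < l`;
`·(σ₀,…,σ_{k-1}) ≤_T ·(τ₀,…,τ_{l-1})` iff for every `i < k` there is `j < l` with
`σᵢ ≤_T τ_j`; and `·(σ₀,…,σ_{k-1}) ≤_T ·y` never holds. -/
inductive TreeLE {Q : Type u} (le : Q → Q → Prop) : LTree Q → LTree Q → Prop
  | leaf {x y : Q} : le x y → TreeLE le (.leaf x) (.leaf y)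
  | leafNode {x : Q} {t : LTree Q} {ts : List (LTree Q)} :
      TreeMemLE le (.leaf x) (t :: ts) → TreeLE le (.leaf x) (.node t ts)
  | node {s t : LTree Q} {ss ts : List (LTree Q)} :
      TreeAllLE le (s :: ss) (t :: ts) → TreeLE le (.node s ss) (.node t ts)

/-- `TreeMemLE le a l` means `∃ b ∈ l, TreeLE le a b`. -/
inductive TreeMemLE {Q : Type u} (le : Q → Q → Prop) : LTree Q → List (LTree Q) → Prop
  | head {a b : LTree Q} {l : List (LTree Q)} : TreeLE le a b → TreeMemLE le a (b :: l)
  | tail {a b : LTree Q} {l : List (LTree Q)} : TreeMemLE le a l → TreeMemLE le a (b :: l)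

/-- `TreeAllLE le l₁ l₂` means `∀ a ∈ l₁, ∃ b ∈ l₂, TreeLE le a b`. -/
inductive TreeAllLE {Q : Type u} (le : Q → Q → Prop) : List (LTree Q) → List (LTree Q) → Prop
  | nil {l : List (LTree Q)} : TreeAllLE le [] l
  | cons {a : LTree Q} {l₁ l₂ : List (LTree Q)} :
      TreeMemLE le a l₂ → TreeAllLE le l₁ l₂ → TreeAllLE le (a :: l₁) l₂
end


/-! ### Auxiliary lemmas -/

section TreeAux

variable {Q : Type u} (le : Q → Q → Prop)

theorem treeMemLE_iff {a : LTree Q} {l : List (LTree Q)} :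
    TreeMemLE le a l ↔ ∃ b ∈ l, TreeLE le a b := by
  constructor
  · intro h
    induction l with
    | nil => cases h
    | cons c l ih =>
      cases h with
      | head h' => exact ⟨c, List.mem_cons_self, h'⟩
      | tail h' =>
        obtain ⟨b, hb, hh⟩ := ih h'
        exact ⟨b, List.mem_cons_of_mem _ hb, hh⟩
  · rintro ⟨b, hb, h⟩
    induction l with
    | nil => simp at hb
    | cons c l ih =>
      rcases List.mem_cons.mp hb with rfl | hb'
      · exact .head h
      · exact .tail (ih hb')

theorem treeAllLE_iff {l₁ l₂ : List (LTree Q)} :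
    TreeAllLE le l₁ l₂ ↔ ∀ a ∈ l₁, ∃ b ∈ l₂, TreeLE le a b := by
  constructor
  · intro h
    induction l₁ with
    | nil => simp
    | cons c l ih =>
      cases h with
      | cons hm hall =>
        intro a ha
        rcases List.mem_cons.mp ha with rfl | ha'
        · exact (treeMemLE_iff le).mp hm
        · exact ih hall a ha'
  · intro h
    induction l₁ with
    | nil => exact .nil
    | cons c l ih =>
      exact .cons ((treeMemLE_iff le).mpr (h c (List.mem_cons_self)))
        (ih fun a ha => h a (List.mem_cons_of_mem _ ha))

theorem treeLE_node_node_iff {s t : LTree Q} {ss ts : List (LTree Q)} :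
    TreeLE le (.node s ss) (.node t ts) ↔ ∀ a ∈ s :: ss, ∃ b ∈ t :: ts, TreeLE le a b := by
  constructor
  · intro h
    cases h with
    | node h' => exact (treeAllLE_iff le).mp h'
  · intro h
    exact .node ((treeAllLE_iff le).mpr h)

open Classical in
/-- The map sending a nonempty finite set of trees to the tree whose children are its
elements (and an arbitrary leaf for the empty set). -/
noncomputable def eTree {Q : Type u} [Nonempty Q] (s : Finset (LTree Q)) : LTree Q :=
  if h : s.toList = [] then .leaf (Classical.arbitrary Q)
  else .node (s.toList.head h) s.toList.tail

theorem eTree_dom_iff [Nonempty Q] {s t : Finset (LTree Q)} (hs : s.Nonempty)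
    (ht : t.Nonempty) :
    (∀ x ∈ s, ∃ y ∈ t, TreeLE le x y) ↔ TreeLE le (eTree s) (eTree t) := by
  have hs' : s.toList ≠ [] := fun h => hs.ne_empty (Finset.toList_eq_nil.mp h)
  have ht' : t.toList ≠ [] := fun h => ht.ne_empty (Finset.toList_eq_nil.mp h)
  classical
  rw [eTree, dif_neg hs', eTree, dif_neg ht', treeLE_node_node_iff,
    List.cons_head_tail hs', List.cons_head_tail ht']
  constructor
  · intro h a ha
    obtain ⟨b, hb, hab⟩ := h a (Finset.mem_toList.mp ha)
    exact ⟨b, Finset.mem_toList.mpr hb, hab⟩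
  · intro h a ha
    obtain ⟨b, hb, hab⟩ := h a (Finset.mem_toList.mpr ha)
    exact ⟨b, Finset.mem_toList.mp hb, hab⟩

theorem incompRel_singleton {x y : LTree Q}
    (h : IncompRelQO (TreeLE le) x y) :
    IncompRelQO (fun s t : Finset (LTree Q) => ∀ a ∈ s, ∃ b ∈ t, TreeLE le a b)
      {x} {y} := by
  obtain ⟨h1, h2⟩ := h
  constructor
  · intro hd
    obtain ⟨b, hb, hxb⟩ := hd x (Finset.mem_singleton_self x)
    rw [Finset.mem_singleton] at hb
    exact h1 (hb ▸ hxb)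
  · intro hd
    obtain ⟨b, hb, hyb⟩ := hd y (Finset.mem_singleton_self y)
    rw [Finset.mem_singleton] at hb
    exact h2 (hb ▸ hyb)

theorem incompRel_dom_nonempty {s t : Finset (LTree Q)}
    (h : IncompRelQO (fun s t : Finset (LTree Q) => ∀ a ∈ s, ∃ b ∈ t, TreeLE le a b) s t) :
    s.Nonempty ∧ t.Nonempty := by
  constructor
  · rcases s.eq_empty_or_nonempty with rfl | h'
    · exact absurd (fun x hx => absurd hx (Finset.notMem_empty x)) h.1
    · exact h'
  · rcases t.eq_empty_or_nonempty with rfl | h'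
    · exact absurd (fun x hx => absurd hx (Finset.notMem_empty x)) h.2
    · exact h'

theorem incompRel_eTree [Nonempty Q] {s t : Finset (LTree Q)}
    (h : IncompRelQO (fun s t : Finset (LTree Q) => ∀ a ∈ s, ∃ b ∈ t, TreeLE le a b) s t) :
    IncompRelQO (TreeLE le) (eTree s) (eTree t) := by
  obtain ⟨hs, ht⟩ := incompRel_dom_nonempty le h
  exact ⟨fun hc => h.1 ((eTree_dom_iff le hs ht).mpr hc),
    fun hc => h.2 ((eTree_dom_iff le ht hs).mpr hc)⟩

end TreeAux

/-- For any nonempty wqo `Q`, the quasi-order `T_f(Q)` satisfies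
`o(T_f(Q)) = o(P_f(T_f(Q)))` and `w(T_f(Q)) = w(P_f(T_f(Q)))`, where `P_f` is the
finite powerset (finite subsets with the domination ordering
`s ≤ t ↔ ∀ x ∈ s, ∃ y ∈ t, x ≤ y`). -/
theorem maxOrderType_width_treeLE_finsetDomination {Q : Type u} [Nonempty Q]
    (le : Q → Q → Prop) (hwqo : IsWQO le) :
    maxOrderType (TreeLE le) =
      maxOrderType (fun s t : Finset (LTree Q) => ∀ x ∈ s, ∃ y ∈ t, TreeLE le x y) ∧
    widthQO (TreeLE le) =
      widthQO (fun s t : Finset (LTree Q) => ∀ x ∈ s, ∃ y ∈ t, TreeLE le x y) := by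
  classical
  set dom : Finset (LTree Q) → Finset (LTree Q) → Prop :=
    fun s t => ∀ x ∈ s, ∃ y ∈ t, TreeLE le x y with hdom
  constructor
  · -- maximal order types
    unfold maxOrderType
    congr 1
    ext o
    simp only [Set.mem_setOf_eq]
    constructor
    · rintro ⟨g, hg, hmono⟩
      have hwfo : WellFounded ((· < ·) : o.ToType → o.ToType → Prop) := wellFounded_lt
      obtain ⟨m, -, hm⟩ := hwfo.has_min Set.univ
        ⟨g (.leaf (Classical.arbitrary Q)), trivial⟩
      have hm' : ∀ y : o.ToType, m ≤ y := fun y => le_of_not_gt (hm y trivial)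
      refine ⟨fun s => if h : s.Nonempty then s.sup' h g else m, ?_, ?_⟩
      · intro x
        obtain ⟨t, rfl⟩ := hg x
        refine ⟨{t}, ?_⟩
        beta_reduce
        rw [dif_pos (Finset.singleton_nonempty t), Finset.sup'_singleton]
      · intro s t hst
        beta_reduce
        by_cases hs : s.Nonempty
        · obtain ⟨x0, hx0⟩ := hs
          obtain ⟨y0, hy0, -⟩ := hst x0 hx0
          rw [dif_pos ⟨x0, hx0⟩, dif_pos ⟨y0, hy0⟩]
          refine Finset.sup'_le _ _ fun x hx => ?_
          obtain ⟨y, hy, hxy⟩ := hst x hx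
          exact (hmono _ _ hxy).trans (Finset.le_sup' g hy)
        · rw [dif_neg hs]
          exact hm' _
    · rintro ⟨g, hg, hmono⟩
      refine ⟨fun t => match t with
        | .leaf _ => g ∅
        | .node t ts => g (t :: ts).toFinset, ?_, ?_⟩
      · intro x
        obtain ⟨s, rfl⟩ := hg x
        rcases eq_or_ne s ∅ with rfl | hne
        · exact ⟨.leaf (Classical.arbitrary Q), rfl⟩
        · have h : s.toList ≠ [] := fun h => hne (Finset.toList_eq_nil.mp h)
          refine ⟨.node (s.toList.head h) s.toList.tail, ?_⟩
          show g ((s.toList.head h :: s.toList.tail).toFinset) = g s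
          rw [List.cons_head_tail h, Finset.toList_toFinset]
      · intro a b hab
        cases hab with
        | leaf h => exact le_refl _
        | leafNode h =>
          exact hmono _ _ (fun x hx => absurd hx (Finset.notMem_empty x))
        | node h =>
          refine hmono _ _ fun x hx => ?_
          obtain ⟨y, hy, hxy⟩ := (treeAllLE_iff le).mp h x (List.mem_toFinset.mp hx)
          exact ⟨y, List.mem_toFinset.mpr hy, hxy⟩
  · -- widths
    have haccP : ∀ lt : List (LTree Q), Acc (WidthStep (TreeLE le)) lt →
        ∀ l : List (Finset (LTree Q)), l.map eTree = lt → Acc (WidthStep dom) l := by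
      intro lt h
      induction h with
      | intro lt _ ih =>
        rintro l rfl
        constructor
        rintro a ⟨x, hx, rfl⟩
        rcases x.eq_empty_or_nonempty with rfl | hxne
        · constructor
          rintro b ⟨y, hy, rfl⟩
          have h0 := hy ∅ (by simp)
          exact absurd (incompRel_dom_nonempty le h0).2 (by simp)
        · refine ih (l.map eTree ++ [eTree x]) ⟨eTree x, ?_, rfl⟩ (l ++ [x])
            (by rw [List.map_append]; rfl)
          intro y' hy'
          obtain ⟨y, hyl, rfl⟩ := List.mem_map.mp hy'
          exact incompRel_eTree le (hx y hyl)
    have haccT : ∀ lp : List (Finset (LTree Q)), Acc (WidthStep dom) lp →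
        ∀ l : List (LTree Q), l.map (fun t => ({t} : Finset (LTree Q))) = lp →
          Acc (WidthStep (TreeLE le)) l := by
      intro lp h
      induction h with
      | intro lp _ ih =>
        rintro l rfl
        constructor
        rintro a ⟨x, hx, rfl⟩
        refine ih (l.map _ ++ [{x}]) ⟨{x}, ?_, rfl⟩ (l ++ [x])
          (by rw [List.map_append]; rfl)
        intro y' hy'
        obtain ⟨y, hyl, rfl⟩ := List.mem_map.mp hy'
        exact incompRel_singleton le (hx y hyl)
    have hiff : WellFounded (WidthStep (TreeLE le)) ↔ WellFounded (WidthStep dom) :=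
      ⟨fun h => ⟨fun l => haccP _ (h.apply _) l rfl⟩,
       fun h => ⟨fun l => haccT _ (h.apply _) l rfl⟩⟩
    unfold widthQO
    by_cases hT : WellFounded (WidthStep (TreeLE le))
    · have hP : WellFounded (WidthStep dom) := hiff.mp hT
      rw [dif_pos hT, dif_pos hP]
      -- rank T ≤ rank P via singletons
      have hTP : ∀ l : List (LTree Q),
          (hT.apply l).rank ≤
            (hP.apply (l.map (fun t => ({t} : Finset (LTree Q))))).rank := by
        intro l
        refine hT.induction
          (C := fun l => (hT.apply l).rank ≤
            (hP.apply (l.map (fun t => ({t} : Finset (LTree Q))))).rank) l ?_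
        intro w ih
        rw [Acc.rank_eq]
        refine Ordinal.iSup_le ?_
        rintro ⟨a, ha⟩
        obtain ⟨x, hx, rfl⟩ := ha
        have h1 : (hT.apply (w ++ [x])).rank ≤
            (hP.apply ((w ++ [x]).map (fun t => ({t} : Finset (LTree Q))))).rank :=
          ih _ ⟨x, hx, rfl⟩
        rw [List.map_append] at h1
        have hstep : WidthStep dom
            (w.map (fun t => ({t} : Finset (LTree Q))) ++ [{x}])
            (w.map (fun t => ({t} : Finset (LTree Q)))) := by
          refine ⟨{x}, ?_, rfl⟩
          intro y' hy'
          obtain ⟨y, hyl, rfl⟩ := List.mem_map.mp hy'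
          exact incompRel_singleton le (hx y hyl)
        exact le_trans (Order.succ_le_succ h1)
          (Order.succ_le_of_lt (Acc.rank_lt_of_rel _ hstep))
      -- rank P ≤ rank T via eTree, for nonnil lists
      have hPT : ∀ l : List (Finset (LTree Q)), l ≠ [] →
          (hP.apply l).rank ≤ (hT.apply (l.map eTree)).rank := by
        intro l
        refine hP.induction
          (C := fun l => l ≠ [] →
            (hP.apply l).rank ≤ (hT.apply (l.map eTree)).rank) l ?_
        intro w ih hw
        rw [Acc.rank_eq]
        refine Ordinal.iSup_le ?_
        rintro ⟨a, ha⟩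
        obtain ⟨s, hs, rfl⟩ := ha
        have h1 : (hP.apply (w ++ [s])).rank ≤
            (hT.apply ((w ++ [s]).map eTree)).rank :=
          ih _ ⟨s, hs, rfl⟩ (by simp)
        rw [List.map_append] at h1
        have hstep : WidthStep (TreeLE le) (w.map eTree ++ [eTree s]) (w.map eTree) := by
          refine ⟨eTree s, ?_, rfl⟩
          intro y' hy'
          obtain ⟨y, hyl, rfl⟩ := List.mem_map.mp hy'
          exact incompRel_eTree le (hs y hyl)
        exact le_trans (Order.succ_le_succ h1)
          (Order.succ_le_of_lt (Acc.rank_lt_of_rel _ hstep))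
      refine le_antisymm (hTP []) ?_
      -- rank P [] ≤ rank T []
      rw [Acc.rank_eq (hP.apply [])]
      refine Ordinal.iSup_le ?_
      rintro ⟨a, ha⟩
      obtain ⟨s, hs, hsa⟩ := ha
      rcases s.eq_empty_or_nonempty with rfl | hsne
      · -- rank of [∅] is 0
        have h0 : (hP.apply ([] ++ [(∅ : Finset (LTree Q))])).rank = 0 := by
          refine le_antisymm ?_ zero_le
          rw [Acc.rank_eq]
          refine Ordinal.iSup_le ?_
          rintro ⟨b, y, hy, rfl⟩
          exact absurd (incompRel_dom_nonempty le (hy ∅ (by simp))).2 (by simp)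
        subst hsa
        rw [show ((hP.apply ([] : List (Finset (LTree Q)))).inv
            ⟨∅, hs, rfl⟩).rank =
            (hP.apply ([] ++ [(∅ : Finset (LTree Q))])).rank from rfl, h0]
        have hstep : WidthStep (TreeLE le)
            ([] ++ [LTree.leaf (Classical.arbitrary Q)]) [] :=
          ⟨.leaf (Classical.arbitrary Q), by simp, rfl⟩
        exact Order.succ_le_of_lt
          (lt_of_le_of_lt zero_le (Acc.rank_lt_of_rel _ hstep))
      · have h1 : (hP.apply ([] ++ [s])).rank ≤
            (hT.apply (([] ++ [s]).map eTree)).rank := hPT ([] ++ [s]) (by simp)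
        have hstep : WidthStep (TreeLE le) ([] ++ [eTree s]) [] :=
          ⟨eTree s, by simp, rfl⟩
        have h2 : (hT.apply ([] ++ [eTree s])).rank < (hT.apply []).rank :=
          Acc.rank_lt_of_rel _ hstep
        subst hsa
        exact le_trans (Order.succ_le_succ h1) (Order.succ_le_of_lt h2)
    · rw [dif_neg hT, dif_neg (fun h => hT (hiff.mpr h))]
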